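/- Let V : ℝ³ → ℝ be continuous with V(λx) = λ^s V(x) for all λ > 0 and some s > 2, and V(x) > 0 for |x| = 1. Then for all g > 0 and Ω ≥ 0, setting ω = g^{−(s−2)/(2(s+3))} Ω, the Thomas–Fermi minimizers satisfy the exact scaling relation g^{3/(s+3)} ρ^TF_{g,Ω}( g^{1/(s+3)} x ) = ρ^TF_{1,ω}(x) for almost every x ∈ ℝ³. -/

import Mathlib

open MeasureTheory Filter Topology

noncomputable section

/-- Three-dimensional Euclidean space. -/
abbrev E3 := EuclideanSpace ℝ (Fin 3)

/-- The distance `r(x) = √(x₁² + x₂²)` from `x` to the `x₃`-axis. -/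
def rax (x : E3) : ℝ := Real.sqrt (x 0 ^ 2 + x 1 ^ 2)

/-- The integrand of the 3D Thomas–Fermi functional:
`V ρ − (Ω²/4) r² ρ + g ρ²`. -/
def tfIntegrand (V : E3 → ℝ) (g Ω : ℝ) (ρ : E3 → ℝ) (x : E3) : ℝ :=
  V x * ρ x - Ω ^ 2 / 4 * rax x ^ 2 * ρ x + g * ρ x ^ 2

/-- Admissible densities for the 3D Thomas–Fermi problem: measurable, nonnegative,
in `L¹ ∩ L²`, with finite potential terms and unit mass. -/
def tfAdmissible (V : E3 → ℝ) (ρ : E3 → ℝ) : Prop :=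
  Measurable ρ ∧ (∀ x, 0 ≤ ρ x) ∧ Integrable ρ ∧ Integrable (fun x => ρ x ^ 2) ∧
    Integrable (fun x => V x * ρ x) ∧ Integrable (fun x => rax x ^ 2 * ρ x) ∧
    (∫ x, ρ x) = 1

/-- The 3D Thomas–Fermi energy `E^TF_{g,Ω}`. -/
def ETF (V : E3 → ℝ) (g Ω : ℝ) : ℝ :=
  sInf { e | ∃ ρ : E3 → ℝ, tfAdmissible V ρ ∧ e = ∫ x, tfIntegrand V g Ω ρ x }

/-- The candidate Thomas–Fermi minimizer with chemical potential `μ`: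
`ρ^TF_{g,Ω}(x) = (1/(2g)) [μ + (Ω²/4) r(x)² − V(x)]₊`. -/
def rhoTF (V : E3 → ℝ) (g Ω μ : ℝ) (x : E3) : ℝ :=
  1 / (2 * g) * max (μ + Ω ^ 2 / 4 * rax x ^ 2 - V x) 0

/-- Homogeneity of degree `s`: `V(λx) = λ^s V(x)` for all `λ > 0`. -/
def Homogeneous (V : E3 → ℝ) (s : ℝ) : Prop :=
  ∀ lam : ℝ, 0 < lam → ∀ x : E3, V (lam • x) = lam ^ s * V x

/-- The effective potential `W(x) = V(x) − (1/4) r(x)²`. -/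
def Wpot (V : E3 → ℝ) (x : E3) : ℝ := V x - 1 / 4 * rax x ^ 2


lemma rax_smul (c : ℝ) (hc : 0 ≤ c) (x : E3) : rax (c • x) = c * rax x := by
  unfold rax
  simp only [PiLp.smul_apply, smul_eq_mul]
  rw [show (c * x 0) ^ 2 + (c * x 1) ^ 2 = c ^ 2 * (x 0 ^ 2 + x 1 ^ 2) by ring,
    Real.sqrt_mul (sq_nonneg c), Real.sqrt_sq hc]

lemma rho_scale (V : E3 → ℝ) (s : ℝ) (hs : 2 < s) (hhom : Homogeneous V s)
    (g Ω μ : ℝ) (hg : 0 < g) (x : E3) :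
    g ^ ((3 : ℝ) / (s + 3)) * rhoTF V g Ω μ ((g ^ ((1 : ℝ) / (s + 3))) • x) =
      rhoTF V 1 (g ^ (-((s - 2) / (2 * (s + 3)))) * Ω) (μ * g ^ (-(s / (s + 3)))) x := by
  have hs3 : (0:ℝ) < s + 3 := by linarith
  set lam : ℝ := g ^ ((1 : ℝ) / (s + 3)) with hlam_def
  have hlam : 0 < lam := Real.rpow_pos_of_pos hg _
  have h1 : lam ^ s = g ^ (s / (s + 3)) := by
    rw [hlam_def, ← Real.rpow_mul hg.le]
    congr 1
    field_simp
  have h2 : lam ^ (2:ℕ) = g ^ ((2:ℝ) / (s + 3)) := by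
    rw [← Real.rpow_natCast lam 2, hlam_def, ← Real.rpow_mul hg.le]
    norm_num
    congr 1
    field_simp
  have h3 : g ^ (s / (s + 3)) * g ^ (-(s / (s + 3))) = 1 := by
    rw [← Real.rpow_add hg]; simp
  have h4 : g ^ (s / (s + 3)) * (g ^ (-((s - 2) / (2 * (s + 3))))) ^ (2:ℕ) = g ^ ((2:ℝ)/(s + 3)) := by
    rw [← Real.rpow_natCast _ 2, ← Real.rpow_mul hg.le, ← Real.rpow_add hg]
    congr 1
    push_cast
    field_simp
    ring
  have h5 : g ^ ((3 : ℝ) / (s + 3)) / (2 * g) * g ^ (s / (s + 3)) = 1 / 2 := by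
    rw [div_mul_eq_mul_div, ← Real.rpow_add hg]
    rw [show (3:ℝ)/(s+3) + s/(s+3) = 1 by field_simp; ring]
    rw [Real.rpow_one]
    field_simp
  unfold rhoTF
  rw [rax_smul lam hlam.le, hhom lam hlam, mul_pow]
  have key : μ + Ω ^ 2 / 4 * (lam ^ (2:ℕ) * rax x ^ 2) - lam ^ s * V x
      = lam ^ s * (μ * g ^ (-(s / (s + 3))) +
        (g ^ (-((s - 2) / (2 * (s + 3)))) * Ω) ^ 2 / 4 * rax x ^ 2 - V x) := by
    rw [h1]
    rw [mul_pow]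
    have e1 : g ^ (s / (s + 3)) * (μ * g ^ (-(s / (s + 3)))) = μ := by
      rw [mul_comm μ _, ← mul_assoc, h3, one_mul]
    have e2 : g ^ (s / (s + 3)) * ((g ^ (-((s - 2) / (2 * (s + 3))))) ^ (2:ℕ) * Ω ^ 2 / 4 * rax x ^ 2)
        = g ^ ((2:ℝ)/(s+3)) * Ω ^ 2 / 4 * rax x ^ 2 := by
      rw [← h4]; ring
    rw [mul_sub, mul_add, e1, e2, ← h2]
    ring
  rw [key]
  rw [show lam ^ s * (μ * g ^ (-(s / (s + 3))) + (g ^ (-((s - 2) / (2 * (s + 3)))) * Ω) ^ 2 / 4 * rax x ^ 2 - V x) ⊔ 0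
      = lam ^ s * ((μ * g ^ (-(s / (s + 3))) + (g ^ (-((s - 2) / (2 * (s + 3)))) * Ω) ^ 2 / 4 * rax x ^ 2 - V x) ⊔ 0) from by
    rw [mul_max_of_nonneg _ _ (by positivity : (0:ℝ) ≤ lam ^ s), mul_zero], h1]
  linear_combination (max (μ * g ^ (-(s / (s + 3))) + (g ^ (-((s - 2) / (2 * (s + 3)))) * Ω) ^ 2 / 4 * rax x ^ 2 - V x) 0) * h5

lemma rho_mono (V : E3 → ℝ) (ω : ℝ) {μ₁ μ₂ : ℝ} (h : μ₁ ≤ μ₂) (x : E3) :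
    rhoTF V 1 ω μ₁ x ≤ rhoTF V 1 ω μ₂ x := by
  unfold rhoTF
  apply mul_le_mul_of_nonneg_left _ (by norm_num)
  exact max_le_max (by linarith) le_rfl

lemma ae_eq_of_le_of_integral_eq {f h : E3 → ℝ} (hf : Integrable f) (hh : Integrable h)
    (hle : ∀ x, f x ≤ h x) (heq : (∫ x, f x) = ∫ x, h x) : f =ᵐ[volume] h := by
  have hz : (∫ x, (h x - f x)) = 0 := by
    rw [integral_sub hh hf, heq, sub_self]
  have := (integral_eq_zero_iff_of_nonneg (fun x => sub_nonneg.2 (hle x)) (hh.sub hf)).1 hz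
  filter_upwards [this] with x hx
  have hx' : h x - f x = 0 := hx
  linarith


/-- **Exact scaling relation for the 3D Thomas–Fermi minimizer**: with
`ω = g^{−(s−2)/(2(s+3))} Ω`, the normalized minimizers satisfy

`g^{3/(s+3)} ρ^TF_{g,Ω}(g^{1/(s+3)} x) = ρ^TF_{1,ω}(x)` for a.e. `x ∈ ℝ³`. -/
theorem tf3_density_scaling (V : E3 → ℝ) (hVc : Continuous V) (s : ℝ) (hs : 2 < s)
    (hhom : Homogeneous V s) (hVpos : ∀ x : E3, ‖x‖ = 1 → 0 < V x)
    (g Ω : ℝ) (hg : 0 < g) (hΩ : 0 ≤ Ω)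
    (μ μ' : ℝ) (hμ : (∫ x, rhoTF V g Ω μ x) = 1)
    (hμ' : (∫ x, rhoTF V 1 (g ^ (-((s - 2) / (2 * (s + 3)))) * Ω) μ' x) = 1) :
    ∀ᵐ x : E3,
      g ^ ((3 : ℝ) / (s + 3)) * rhoTF V g Ω μ ((g ^ ((1 : ℝ) / (s + 3))) • x) =
        rhoTF V 1 (g ^ (-((s - 2) / (2 * (s + 3)))) * Ω) μ' x := by
  have hs3 : (0:ℝ) < s + 3 := by linarith
  set ω : ℝ := g ^ (-((s - 2) / (2 * (s + 3)))) * Ω with hω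
  set μ'' : ℝ := μ * g ^ (-(s / (s + 3))) with hμ''def
  set lam : ℝ := g ^ ((1 : ℝ) / (s + 3)) with hlam_def
  have hlam : 0 < lam := Real.rpow_pos_of_pos hg _
  have hpt : ∀ x : E3, g ^ ((3 : ℝ) / (s + 3)) * rhoTF V g Ω μ (lam • x) = rhoTF V 1 ω μ'' x :=
    fun x => rho_scale V s hs hhom g Ω μ hg x
  have hlam3 : lam ^ (3:ℕ) = g ^ ((3:ℝ) / (s + 3)) := by
    rw [← Real.rpow_natCast lam 3, hlam_def, ← Real.rpow_mul hg.le]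
    norm_num
    congr 1
    field_simp
  have hmass : (∫ x, rhoTF V 1 ω μ'' x) = 1 := by
    have hcv := MeasureTheory.Measure.integral_comp_smul_of_nonneg (volume)
      (rhoTF V g Ω μ) lam (hR := hlam.le)
    simp only [finrank_euclideanSpace_fin, smul_eq_mul] at hcv
    calc (∫ x, rhoTF V 1 ω μ'' x)
        = ∫ x, g ^ ((3 : ℝ) / (s + 3)) * rhoTF V g Ω μ (lam • x) := by
          congr 1; funext x; rw [hpt x]
      _ = g ^ ((3 : ℝ) / (s + 3)) * ∫ x, rhoTF V g Ω μ (lam • x) := integral_const_mul _ _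
      _ = g ^ ((3 : ℝ) / (s + 3)) * ((lam ^ (3:ℕ))⁻¹ * ∫ x, rhoTF V g Ω μ x) := by rw [hcv]
      _ = 1 := by
          rw [hμ, hlam3, mul_one, mul_inv_cancel₀]
          positivity
  have hint' : Integrable (rhoTF V 1 ω μ') := by
    by_contra hc
    rw [integral_undef hc] at hμ'
    norm_num at hμ'
  have hint'' : Integrable (rhoTF V 1 ω μ'') := by
    by_contra hc
    rw [integral_undef hc] at hmass
    norm_num at hmass
  have hae : rhoTF V 1 ω μ'' =ᵐ[volume] rhoTF V 1 ω μ' := by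
    rcases le_total μ'' μ' with h | h
    · exact ae_eq_of_le_of_integral_eq hint'' hint' (rho_mono V ω h)
        (by rw [hmass, hμ'])
    · exact (ae_eq_of_le_of_integral_eq hint' hint'' (rho_mono V ω h)
        (by rw [hmass, hμ'])).symm
  filter_upwards [hae] with x hx
  rw [hpt x]
  exact hx
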